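/- Let L₁ = { a 0^{3m+1} b (0⁺c)^{m-2} 0⁺ : m ≥ 3 }. Then L₁ is context-free. -/

import Mathlib

/-- The alphabet `{a,b,c,0}` encoded as `Fin 4`, with `0 := 0`, `a := 1`, `b := 2`, `c := 3`.
`L₁ = { a 0^{3m+1} b (0⁺c)^{m-2} 0⁺ : m ≥ 3 }`. -/
def L₁ : Language (Fin 4) :=
  { w | ∃ m : ℕ, 3 ≤ m ∧ ∃ ks : List ℕ, ∃ kf : ℕ,
      ks.length = m - 2 ∧ (∀ k ∈ ks, 1 ≤ k) ∧ 1 ≤ kf ∧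
      w = 1 :: List.replicate (3 * m + 1) 0 ++ 2 ::
        ((ks.map (fun k => List.replicate k (0 : Fin 4) ++ [3])).flatten ++
          List.replicate kf 0) }

deriving instance DecidableEq for Symbol
deriving instance DecidableEq for ContextFreeRule

namespace L1cf

open ContextFreeGrammar Symbol

abbrev Sym := Symbol (Fin 4) (Fin 4)
abbrev t (x : Fin 4) : Sym := Symbol.terminal x
abbrev n (x : Fin 4) : Sym := Symbol.nonterminal x

def R1 : ContextFreeRule (Fin 4) (Fin 4) := ⟨0, t 1 :: List.replicate 10 (t 0) ++ [n 1, n 3]⟩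
def R2 : ContextFreeRule (Fin 4) (Fin 4) := ⟨1, [t 0, t 0, t 0, n 1, n 2]⟩
def R3 : ContextFreeRule (Fin 4) (Fin 4) := ⟨1, [t 2, n 2]⟩
def R4 : ContextFreeRule (Fin 4) (Fin 4) := ⟨2, [t 0, n 2]⟩
def R5 : ContextFreeRule (Fin 4) (Fin 4) := ⟨2, [t 0, t 3]⟩
def R6 : ContextFreeRule (Fin 4) (Fin 4) := ⟨3, [t 0, n 3]⟩
def R7 : ContextFreeRule (Fin 4) (Fin 4) := ⟨3, [t 0]⟩

abbrev g : ContextFreeGrammar (Fin 4) := ⟨Fin 4, 0, {R1, R2, R3, R4, R5, R6, R7}⟩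

def fseg (k : ℕ) : List (Fin 4) := List.replicate k 0 ++ [3]

lemma rewrites_append_split {r : ContextFreeRule (Fin 4) (Fin 4)}
    {u v w : List Sym} (h : r.Rewrites (u ++ v) w) :
    (∃ u', r.Rewrites u u' ∧ w = u' ++ v) ∨ (∃ v', r.Rewrites v v' ∧ w = u ++ v') := by
  induction u generalizing w with
  | nil => exact .inr ⟨w, h, rfl⟩
  | cons x u ih =>
    cases h with
    | head s =>
      exact .inl ⟨r.output ++ u, ContextFreeRule.Rewrites.head u, by simp⟩
    | cons x h =>
      rcases ih h with ⟨u', hu, rfl⟩ | ⟨v', hv, rfl⟩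
      · exact .inl ⟨x :: u', hu.cons x, rfl⟩
      · exact .inr ⟨v', hv, rfl⟩

lemma no_rewrite_terminal {r : ContextFreeRule (Fin 4) (Fin 4)} {u : List (Fin 4)}
    {w : List Sym} (h : r.Rewrites (u.map t) w) : False := by
  rcases h.exists_parts with ⟨p, q, hpq, -⟩
  have : Symbol.nonterminal r.input ∈ u.map t := by rw [hpq]; simp
  simp only [List.mem_map] at this
  rcases this with ⟨x, -, hx⟩
  simp [t] at hx

lemma derives_terminal_eq {u : List (Fin 4)} {w : List Sym}
    (h : g.Derives (u.map t) w) : w = u.map t := by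
  rcases h.eq_or_head with rfl | ⟨v, ⟨r, -, hr⟩, -⟩
  · rfl
  · exact absurd hr no_rewrite_terminal

lemma derives_terminal_cancel {u w : List (Fin 4)} (h : g.Derives (u.map t) (w.map t)) :
    w = u := by
  have hinj : Function.Injective (t : Fin 4 → Sym) := fun a b hab => Symbol.terminal.inj hab
  exact (List.map_injective_iff.mpr hinj) (derives_terminal_eq h)

lemma derives_split {s : List Sym} {w : List (Fin 4)}
    (h : g.Derives s (w.map t)) :
    ∀ u v : List Sym, s = u ++ v → ∃ w1 w2 : List (Fin 4), w = w1 ++ w2 ∧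
      g.Derives u (w1.map t) ∧ g.Derives v (w2.map t) := by
  induction h using Relation.ReflTransGen.head_induction_on with
  | refl =>
    intro u v huv
    refine ⟨w.take u.length, w.drop u.length, (List.take_append_drop _ _).symm, ?_, ?_⟩
    · have : u = (w.take u.length).map t := by
        rw [List.map_take, huv, List.take_left]
      rw [← this]
    · have : v = (w.drop u.length).map t := by
        rw [List.map_drop, huv, List.drop_left]
      rw [← this]
  | head hp hd ih =>
    intro u v huv
    subst huv
    rcases hp with ⟨r, hrmem, hrw⟩
    rcases rewrites_append_split hrw with ⟨u', hu, rfl⟩ | ⟨v', hv, rfl⟩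
    · rcases ih u' v rfl with ⟨w1, w2, rfl, h1, h2⟩
      exact ⟨w1, w2, rfl, (Produces.trans_derives ⟨r, hrmem, hu⟩ h1), h2⟩
    · rcases ih u v' rfl with ⟨w1, w2, rfl, h1, h2⟩
      exact ⟨w1, w2, rfl, h1, (Produces.trans_derives ⟨r, hrmem, hv⟩ h2)⟩

lemma not_rewrites_nil {r : ContextFreeRule (Fin 4) (Fin 4)} {w : List Sym}
    (h : r.Rewrites [] w) : False := by cases h

lemma derives_nt_head {A : Fin 4} {w : List (Fin 4)}
    (h : g.Derives [n A] (w.map t)) :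
    ∃ r ∈ g.rules, r.input = A ∧ g.Derives r.output (w.map t) := by
  rcases h.eq_or_head with heq | ⟨v, ⟨r, hrmem, hrw⟩, hder⟩
  · exfalso
    cases w with
    | nil => simp at heq
    | cons x xs =>
      cases xs with
      | cons y ys => simp at heq
      | nil => simp [n, t] at heq
  · cases hrw with
    | head s =>
      refine ⟨r, hrmem, rfl, ?_⟩
      simpa using hder
    | cons x h => exact absurd h not_rewrites_nil

lemma semZ : ∀ N, ∀ w : List (Fin 4), w.length < N → g.Derives [n 3] (w.map t) →
    ∃ k, 1 ≤ k ∧ w = List.replicate k 0 := by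
  intro N
  induction N with
  | zero => omega
  | succ N ih =>
    intro w hlen hd
    obtain ⟨r, hrmem, hinput, hout⟩ := derives_nt_head hd
    simp only [g, Finset.mem_insert, Finset.mem_singleton] at hrmem
    rcases hrmem with rfl | rfl | rfl | rfl | rfl | rfl | rfl
    · exact absurd (show R1.input = (3:Fin 4) from hinput) (by decide)
    · exact absurd (show R2.input = (3:Fin 4) from hinput) (by decide)
    · exact absurd (show R3.input = (3:Fin 4) from hinput) (by decide)
    · exact absurd (show R4.input = (3:Fin 4) from hinput) (by decide)
    · exact absurd (show R5.input = (3:Fin 4) from hinput) (by decide)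
    · -- R6 : Z → 0 Z
      obtain ⟨w1, w2, rfl, h1, h2⟩ := derives_split hout [t 0] [n 3] rfl
      have hw1 : w1 = [0] := derives_terminal_cancel (u := [0]) h1
      subst hw1
      obtain ⟨k, hk, rfl⟩ := ih w2 (by simp at hlen; omega) h2
      exact ⟨k + 1, by omega, by simp [List.replicate_succ]⟩
    · -- R7 : Z → 0
      have hw : w = [0] := derives_terminal_cancel (u := [0]) hout
      exact ⟨1, le_refl 1, by simp [hw]⟩

lemma semP : ∀ N, ∀ w : List (Fin 4), w.length < N → g.Derives [n 2] (w.map t) →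
    ∃ k, 1 ≤ k ∧ w = fseg k := by
  intro N
  induction N with
  | zero => omega
  | succ N ih =>
    intro w hlen hd
    obtain ⟨r, hrmem, hinput, hout⟩ := derives_nt_head hd
    simp only [g, Finset.mem_insert, Finset.mem_singleton] at hrmem
    rcases hrmem with rfl | rfl | rfl | rfl | rfl | rfl | rfl
    · exact absurd (show R1.input = (2:Fin 4) from hinput) (by decide)
    · exact absurd (show R2.input = (2:Fin 4) from hinput) (by decide)
    · exact absurd (show R3.input = (2:Fin 4) from hinput) (by decide)
    · -- R4 : P → 0 P
      obtain ⟨w1, w2, rfl, h1, h2⟩ := derives_split hout [t 0] [n 2] rfl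
      have hw1 : w1 = [0] := derives_terminal_cancel (u := [0]) h1
      subst hw1
      obtain ⟨k, hk, rfl⟩ := ih w2 (by simp at hlen; omega) h2
      exact ⟨k + 1, by omega, by simp [fseg, List.replicate_succ]⟩
    · -- R5 : P → 0 c
      have hw : w = [0, 3] := derives_terminal_cancel (u := [0, 3]) hout
      exact ⟨1, le_refl 1, by simp [hw, fseg]⟩
    · exact absurd (show R6.input = (2:Fin 4) from hinput) (by decide)
    · exact absurd (show R7.input = (2:Fin 4) from hinput) (by decide)

lemma semM : ∀ N, ∀ w : List (Fin 4), w.length < N → g.Derives [n 1] (w.map t) →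
    ∃ ks : List ℕ, 1 ≤ ks.length ∧ (∀ k ∈ ks, 1 ≤ k) ∧
      w = List.replicate (3 * (ks.length - 1)) 0 ++ 2 :: (ks.map fseg).flatten := by
  intro N
  induction N with
  | zero => omega
  | succ N ih =>
    intro w hlen hd
    obtain ⟨r, hrmem, hinput, hout⟩ := derives_nt_head hd
    simp only [g, Finset.mem_insert, Finset.mem_singleton] at hrmem
    rcases hrmem with rfl | rfl | rfl | rfl | rfl | rfl | rfl
    · exact absurd (show R1.input = (1:Fin 4) from hinput) (by decide)
    · -- R2 : M → 000 M P
      obtain ⟨wa, w3, rfl, ha, h3⟩ :=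
        derives_split hout [t 0, t 0, t 0, n 1] [n 2] rfl
      obtain ⟨w1, w2, rfl, h1, h2⟩ := derives_split ha [t 0, t 0, t 0] [n 1] rfl
      have hw1 : w1 = [0, 0, 0] := derives_terminal_cancel (u := [0, 0, 0]) h1
      subst hw1
      obtain ⟨k, hk, rfl⟩ := semP (w3.length + 1) w3 (by omega) h3
      have hlen3 : 2 ≤ (fseg k).length := by simp [fseg]; omega
      obtain ⟨ks, hks1, hksall, rfl⟩ := ih w2 (by simp at hlen ⊢; omega) h2
      refine ⟨ks ++ [k], by simp, ?_, ?_⟩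
      · intro x hx
        rcases List.mem_append.mp hx with hx | hx
        · exact hksall x hx
        · simp at hx; omega
      · have h3 : 3 * ((ks ++ [k]).length - 1) = 3 + 3 * (ks.length - 1) := by
          simp; omega
        rw [h3, List.replicate_add]
        simp [List.flatten_append]
    · -- R3 : M → b P
      obtain ⟨w1, w2, rfl, h1, h2⟩ := derives_split hout [t 2] [n 2] rfl
      have hw1 : w1 = [2] := derives_terminal_cancel (u := [2]) h1
      subst hw1
      obtain ⟨k, hk, rfl⟩ := semP (w2.length + 1) w2 (by omega) h2
      exact ⟨[k], by simp, by simpa using hk, by simp⟩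
    · exact absurd (show R4.input = (1:Fin 4) from hinput) (by decide)
    · exact absurd (show R5.input = (1:Fin 4) from hinput) (by decide)
    · exact absurd (show R6.input = (1:Fin 4) from hinput) (by decide)
    · exact absurd (show R7.input = (1:Fin 4) from hinput) (by decide)


lemma genZ (k : ℕ) (hk : 1 ≤ k) : g.Derives [n 3] ((List.replicate k (0:Fin 4)).map t) := by
  induction k with
  | zero => omega
  | succ k ih =>
    by_cases hk0 : k = 0
    · subst hk0
      exact Produces.single ⟨R7, by simp [g], ContextFreeRule.Rewrites.input_output⟩
    · have hk' : 1 ≤ k := by omega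
      refine Produces.trans_derives ⟨R6, by simp [g], ContextFreeRule.Rewrites.input_output⟩ ?_
      exact (ih hk').append_left [t 0]

lemma genP (k : ℕ) (hk : 1 ≤ k) : g.Derives [n 2] ((fseg k).map t) := by
  induction k with
  | zero => omega
  | succ k ih =>
    by_cases hk0 : k = 0
    · subst hk0
      exact Produces.single ⟨R5, by simp [g], ContextFreeRule.Rewrites.input_output⟩
    · have hk' : 1 ≤ k := by omega
      refine Produces.trans_derives ⟨R4, by simp [g], ContextFreeRule.Rewrites.input_output⟩ ?_
      exact (ih hk').append_left [t 0]

lemma genM : ∀ ks : List ℕ, 1 ≤ ks.length → (∀ k ∈ ks, 1 ≤ k) →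
    g.Derives [n 1]
      ((List.replicate (3 * (ks.length - 1)) (0:Fin 4) ++ 2 :: (ks.map fseg).flatten).map t) := by
  intro ks
  induction ks using List.reverseRecOn with
  | nil => intro h; simp at h
  | append_singleton l k ih =>
    intro _ hall
    have hk : 1 ≤ k := hall k (by simp)
    by_cases hl : l = []
    · subst hl
      refine Produces.trans_derives ⟨R3, by simp [g], ContextFreeRule.Rewrites.input_output⟩ ?_
      have hd := (genP k hk).append_left [t 2]
      have heq : (List.replicate (3 * ((([] : List ℕ) ++ [k]).length - 1)) (0:Fin 4) ++
          2 :: ((([] : List ℕ) ++ [k]).map fseg).flatten) = 2 :: fseg k := by simp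
      rw [heq]
      exact hd
    · have hlen' : 1 ≤ l.length := List.length_pos_iff.mpr hl
      have ihd := ih hlen' (fun x hx => hall x (by simp [hx]))
      refine Produces.trans_derives ⟨R2, by simp [g], ContextFreeRule.Rewrites.input_output⟩ ?_
      set mid : List (Fin 4) :=
        List.replicate (3 * (l.length - 1)) (0:Fin 4) ++ 2 :: (l.map fseg).flatten with hmid
      have d1 := (ihd.append_right [n 2]).append_left [t 0, t 0, t 0]
      have d2 := (genP k hk).append_left ([t 0, t 0, t 0] ++ mid.map t)
      have heq : ((List.replicate (3 * ((l ++ [k]).length - 1)) (0:Fin 4) ++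
          2 :: ((l ++ [k]).map fseg).flatten).map t)
          = ([t 0, t 0, t 0] ++ mid.map t) ++ (fseg k).map t := by
        have h3 : 3 * ((l ++ [k]).length - 1) = 3 + 3 * (l.length - 1) := by
          simp; omega
        rw [h3, List.replicate_add]
        simp [hmid, List.append_assoc]
      rw [heq]
      exact d1.trans d2

end L1cf

theorem L₁_contextFree : L₁.IsContextFree := by
  refine ⟨L1cf.g, ?_⟩
  ext w
  rw [ContextFreeGrammar.mem_language_iff]
  constructor
  · intro hw
    obtain ⟨r, hrmem, hinput, hout⟩ := L1cf.derives_nt_head (A := 0) hw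
    simp only [L1cf.g, Finset.mem_insert, Finset.mem_singleton] at hrmem
    rcases hrmem with rfl | rfl | rfl | rfl | rfl | rfl | rfl
    · -- R1
      obtain ⟨w0, wrest, rfl, h0, hrest⟩ := L1cf.derives_split hout
        ((1 :: List.replicate 10 (0:Fin 4)).map L1cf.t) [L1cf.n 1, L1cf.n 3]
        (by simp [L1cf.R1])
      obtain ⟨w1, w2, rfl, h1, h2⟩ := L1cf.derives_split hrest [L1cf.n 1] [L1cf.n 3] rfl
      have hw0 : w0 = 1 :: List.replicate 10 0 := L1cf.derives_terminal_cancel h0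
      obtain ⟨ks, hks1, hksall, rfl⟩ := L1cf.semM (w1.length + 1) w1 (by omega) h1
      obtain ⟨k, hk, rfl⟩ := L1cf.semZ (w2.length + 1) w2 (by omega) h2
      subst hw0
      refine ⟨ks.length + 2, by omega, ks, k, by omega, hksall, hk, ?_⟩
      have h10 : 3 * (ks.length + 2) + 1 = 10 + 3 * (ks.length - 1) := by omega
      rw [h10, List.replicate_add]
      simp [L1cf.fseg, List.append_assoc]
      rfl
    · exact absurd (show L1cf.R2.input = (0:Fin 4) from hinput) (by decide)
    · exact absurd (show L1cf.R3.input = (0:Fin 4) from hinput) (by decide)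
    · exact absurd (show L1cf.R4.input = (0:Fin 4) from hinput) (by decide)
    · exact absurd (show L1cf.R5.input = (0:Fin 4) from hinput) (by decide)
    · exact absurd (show L1cf.R6.input = (0:Fin 4) from hinput) (by decide)
    · exact absurd (show L1cf.R7.input = (0:Fin 4) from hinput) (by decide)
  · rintro ⟨m, hm, ks, kf, hlen, hall, hkf, rfl⟩
    have hks1 : 1 ≤ ks.length := by omega
    refine ContextFreeGrammar.Produces.trans_derives
      ⟨L1cf.R1, by simp [L1cf.g], ContextFreeRule.Rewrites.input_output⟩ ?_
    set mid : List (Fin 4) :=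
      List.replicate (3 * (ks.length - 1)) (0:Fin 4) ++ 2 :: (ks.map L1cf.fseg).flatten with hmid
    have d1 := ((L1cf.genM ks hks1 hall).append_right [L1cf.n 3]).append_left
      (L1cf.t 1 :: List.replicate 10 (L1cf.t 0))
    have d2 := (L1cf.genZ kf hkf).append_left
      ((L1cf.t 1 :: List.replicate 10 (L1cf.t 0)) ++ mid.map L1cf.t)
    have heq : ((1 :: List.replicate (3 * m + 1) (0:Fin 4) ++ 2 ::
        ((ks.map (fun k => List.replicate k (0 : Fin 4) ++ [3])).flatten ++
          List.replicate kf 0)).map Symbol.terminal)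
        = ((L1cf.t 1 :: List.replicate 10 (L1cf.t 0)) ++ mid.map L1cf.t)
            ++ (List.replicate kf (0:Fin 4)).map L1cf.t := by
      have h10 : 3 * m + 1 = 10 + 3 * (ks.length - 1) := by omega
      rw [h10, List.replicate_add]
      simp [hmid, L1cf.fseg, L1cf.t, List.append_assoc]
      rfl
    rw [heq]
    exact d1.trans d2
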